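/- Let c > 0 and r ≥ 1 + c with r > (log n)/(log 2). Then for every real n ≥ 1, the series ∑_{i=1}^∞ (n · log i)/(i^r + n) is bounded above by (1 + 2/c + 2/(c² log 2)) · (log 2) · n · 2^{-r}. -/

import Mathlib

noncomputable def FF (r : ℝ) : ℝ → ℝ := fun x => Real.log x * x ^ (-r)
noncomputable def GG (r : ℝ) : ℝ → ℝ :=
  fun x => -(x ^ (1 - r) * (Real.log x / (r - 1) + 1 / (r - 1) ^ 2))

lemma hasDerivAt_FF (r x : ℝ) (hx : 0 < x) :
    HasDerivAt (fun y : ℝ => Real.log y * y ^ (-r))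
      ((1 - r * Real.log x) * x ^ (-r - 1)) x := by
  have h1 : HasDerivAt (fun y : ℝ => y ^ (-r)) (-r * x ^ (-r - 1)) x :=
    Real.hasDerivAt_rpow_const (Or.inl hx.ne')
  have h2 := (Real.hasDerivAt_log hx.ne').mul h1
  convert h2 using 1
  iterate 3 rfl
  have hx1 : x ^ (-r - 1) = x ^ (-r) * x⁻¹ := by
    rw [← Real.rpow_neg_one x, ← Real.rpow_add hx]; ring_nf
  rw [hx1]; ring

lemma hasDerivAt_GG (r x : ℝ) (hr : r ≠ 1) (hx : 0 < x) :
    HasDerivAt (GG r) (Real.log x * x ^ (-r)) x := by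
  have h1 : HasDerivAt (fun y : ℝ => y ^ (1 - r)) ((1 - r) * x ^ (1 - r - 1)) x :=
    Real.hasDerivAt_rpow_const (Or.inl hx.ne')
  have h2 : HasDerivAt (fun y : ℝ => Real.log y / (r - 1) + 1 / (r - 1) ^ 2)
      (x⁻¹ / (r - 1)) x := ((Real.hasDerivAt_log hx.ne').div_const (r - 1)).add_const _
  have h3 := (h1.mul h2).neg
  convert h3 using 1
  iterate 3 rfl
  have e0 : (1 : ℝ) - r - 1 = -r := by ring
  have e2 : x ^ (1 - r) * x⁻¹ = x ^ (-r) := by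
    rw [← Real.rpow_neg_one x, ← Real.rpow_add hx]; congr 1
  have hr1 : r - 1 ≠ 0 := sub_ne_zero.mpr hr
  rw [e0, mul_div_assoc' (x ^ (1-r)) x⁻¹ (r-1), e2]
  field_simp
  ring

lemma contFF (r : ℝ) (s : Set ℝ) (hs : ∀ x ∈ s, 0 < x) : ContinuousOn (FF r) s := by
  intro x hx
  exact ((Real.continuousAt_log (hs x hx).ne').mul
    (Real.continuousAt_rpow_const x (-r) (Or.inl (hs x hx).ne'))).continuousWithinAt

lemma integral_FF (r a b : ℝ) (hr : 1 < r) (ha : 1 ≤ a) (hab : a ≤ b) :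
    ∫ x in a..b, FF r x = GG r b - GG r a := by
  have h1 : ∀ x ∈ Set.uIcc a b, 0 < x := by
    rw [Set.uIcc_of_le hab]; intro x hx; have := hx.1; linarith
  refine intervalIntegral.integral_eq_sub_of_hasDerivAt
    (fun x hx => hasDerivAt_GG r x (by linarith) (h1 x hx)) ?_
  exact (contFF r _ h1).intervalIntegrable

lemma antitone_FF (r a : ℝ) (ha : 1 ≤ a) (hr0 : 0 < r) (hra : 1 ≤ r * Real.log a) :
    AntitoneOn (FF r) (Set.Ici a) := by
  have ha0 : 0 < a := by linarith
  apply antitoneOn_of_deriv_nonpos (convex_Ici a)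
  · exact contFF r _ (fun x hx => lt_of_lt_of_le ha0 hx)
  · intro x hx
    rw [interior_Ici] at hx
    have hx0 : 0 < x := lt_trans ha0 hx
    exact (hasDerivAt_FF r x hx0).differentiableAt.differentiableWithinAt
  · intro x hx
    rw [interior_Ici] at hx
    have hx0 : 0 < x := lt_trans ha0 hx
    have hd : deriv (FF r) x = (1 - r * Real.log x) * x ^ (-r - 1) :=
      HasDerivAt.deriv (by exact hasDerivAt_FF r x hx0)
    rw [hd]
    have hlog : Real.log a ≤ Real.log x := Real.log_le_log ha0 hx.le
    have h1 : 1 ≤ r * Real.log x := by nlinarith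
    have h2 : (0:ℝ) ≤ x ^ (-r - 1) := (Real.rpow_pos_of_pos hx0 _).le
    nlinarith

lemma GG_nonpos (r b : ℝ) (hr : 1 < r) (hb : 1 ≤ b) : GG r b ≤ 0 := by
  have h0 : (0:ℝ) < b := by linarith
  have h1 : 0 ≤ Real.log b := Real.log_nonneg hb
  have h2 : 0 < b ^ (1-r) := Real.rpow_pos_of_pos h0 _
  have h3 : 0 ≤ b ^ (1-r) * (Real.log b / (r-1) + 1/(r-1)^2) := by
    have : (0:ℝ) < r - 1 := by linarith
    positivity
  simp only [GG]
  linarith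

set_option maxHeartbeats 1000000 in
/-- Lemma 9.1(ii): for c > 0, r ≥ 1 + c with r > log n / log 2, and n ≥ 1,
∑_{i=1}^∞ n log i / (i^r + n) ≤ (1 + 2/c + 2/(c² log 2)) (log 2) n 2^{-r}. -/
theorem stmt_1 (c r n : ℝ) (hc : 0 < c) (hr : 1 + c ≤ r)
    (hr2 : Real.log n / Real.log 2 < r) (hn : 1 ≤ n) :
    ∑' i : ℕ, n * Real.log ((i : ℝ) + 1) / (((i : ℝ) + 1) ^ r + n)
      ≤ (1 + 2 / c + 2 / (c ^ 2 * Real.log 2)) * Real.log 2 * n * 2 ^ (-r) := by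
  have hL : (0:ℝ) < Real.log 2 := Real.log_pos (by norm_num)
  have hL9 : (0.6931471803:ℝ) < Real.log 2 := Real.log_two_gt_d9
  have hL9' : Real.log 2 < 0.6931471808 := Real.log_two_lt_d9
  have hr1 : 1 < r := by linarith
  have ht : (0:ℝ) < r - 1 := by linarith
  have hct : c ≤ r - 1 := by linarith
  have hn0 : (0:ℝ) < n := by linarith
  have h2r : (0:ℝ) < (2:ℝ) ^ r := Real.rpow_pos_of_pos (by norm_num) r
  have hn2r : n ≤ (2:ℝ) ^ r := by
    have h1 : Real.log n < r * Real.log 2 := by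
      rw [div_lt_iff₀ hL] at hr2; linarith
    have h2 : Real.log n < Real.log ((2:ℝ) ^ r) := by
      rw [Real.log_rpow (by norm_num)]; linarith
    exact ((Real.log_lt_log_iff hn0 h2r).mp h2).le
  set L := Real.log 2 with hLdef
  set B : ℝ := (2:ℝ) ^ (-r) with hBdef
  have hB : B = ((2:ℝ)^r)⁻¹ := by rw [hBdef, Real.rpow_neg (by norm_num)]
  have hB0 : 0 < B := by rw [hB]; positivity
  have hBB : B * B = (4:ℝ)^(-r) := by
    rw [hBdef, ← Real.mul_rpow (by norm_num) (by norm_num)]; norm_num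
  have h4r0 : (0:ℝ) < (4:ℝ)^(-r) := Real.rpow_pos_of_pos (by norm_num) _
  have h3r0 : (0:ℝ) < (3:ℝ)^(-r) := Real.rpow_pos_of_pos (by norm_num) _
  have hpos : ∀ i : ℕ, 0 ≤ n * Real.log ((i : ℝ) + 1) / (((i : ℝ) + 1) ^ r + n) := by
    intro i
    have h1 : (0:ℝ) ≤ Real.log ((i:ℝ)+1) := Real.log_nonneg (by
      have : (0:ℝ) ≤ (i:ℝ) := Nat.cast_nonneg _
      linarith)
    have h2 : (0:ℝ) < ((i:ℝ)+1)^r := Real.rpow_pos_of_pos (by positivity) _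
    apply div_nonneg (mul_nonneg hn0.le h1)
    positivity
  apply Real.tsum_le_of_sum_range_le hpos
  intro N
  have key : ∀ k : ℕ, ∑ i ∈ Finset.range (k+3),
      n * Real.log ((i : ℝ) + 1) / (((i : ℝ) + 1) ^ r + n)
      ≤ (1 + 2 / c + 2 / (c ^ 2 * L)) * L * n * B := by
    intro k
    -- the key sum-integral bound
    have hsav : (0:ℝ) ≤ L * (B*B) / 2 := by positivity
    have hkey2 : ∑ j ∈ Finset.range (k+1), FF r (2 + ((j+1 : ℕ) : ℝ))
        ≤ L * (B*B)/2 + (- GG r 2) := by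
      have hcastb : (1:ℝ) ≤ 2 + ((k+1:ℕ):ℝ) ∧ (2:ℝ) ≤ 2 + ((k+1:ℕ):ℝ) := by
        constructor <;> · have : (0:ℝ) ≤ ((k+1:ℕ):ℝ) := Nat.cast_nonneg _
                          linarith
      rcases le_or_gt 1 (r * L) with hcase | hcase
      · -- r log 2 ≥ 1 : FF antitone on [2, ∞)
        have hanti : AntitoneOn (FF r) (Set.Icc (2:ℝ) (2 + ((k+1:ℕ):ℝ))) :=
          (antitone_FF r 2 (by norm_num) (by linarith) hcase).mono (fun x hx => hx.1)
        have h1 := hanti.sum_le_integral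
        have h2 : ∫ x in (2:ℝ)..(2 + ((k+1:ℕ):ℝ)), FF r x
            = GG r (2 + ((k+1:ℕ):ℝ)) - GG r 2 :=
          integral_FF r _ _ hr1 (by norm_num) hcastb.2
        have h3 := GG_nonpos r (2 + ((k+1:ℕ):ℝ)) hr1 hcastb.1
        calc ∑ j ∈ Finset.range (k+1), FF r (2 + ((j+1 : ℕ) : ℝ))
            ≤ ∫ x in (2:ℝ)..(2 + ((k+1:ℕ):ℝ)), FF r x := h1
          _ = GG r (2 + ((k+1:ℕ):ℝ)) - GG r 2 := h2
          _ ≤ - GG r 2 := by linarith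
          _ ≤ L * (B*B)/2 + (- GG r 2) := by linarith
      · -- r log 2 < 1 : r ≤ 3/2
        have hr32 : r ≤ 3/2 := by nlinarith
        have hlog3_lb : 19 * L ≤ 12 * Real.log 3 := by
          have h1 : Real.log ((2:ℝ)^(7:ℕ)) ≤ Real.log (((3:ℝ)/2)^(12:ℕ)) :=
            Real.log_le_log (by positivity) (by norm_num)
          rw [Real.log_pow, Real.log_pow, Real.log_div (by norm_num) (by norm_num)] at h1
          push_cast at h1
          simp only [← hLdef] at h1
          linarith
        have hlog3_ub : 5 * Real.log 3 ≤ 8 * L := by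
          have h1 : Real.log ((3:ℝ)^(5:ℕ)) ≤ Real.log ((2:ℝ)^(8:ℕ)) :=
            Real.log_le_log (by positivity) (by norm_num)
          rw [Real.log_pow, Real.log_pow] at h1
          push_cast at h1
          simp only [← hLdef] at h1
          linarith
        have hlog3_1 : (1:ℝ) ≤ Real.log 3 := by linarith
        -- F 3 ≤ sav + (G 3 - G 2)
        have hF3 : FF r 3 ≤ L * (B*B)/2 + (GG r 3 - GG r 2) := by
          have hint : GG r 3 - GG r 2 = ∫ x in (2:ℝ)..3, FF r x :=
            (integral_FF r 2 3 hr1 (by norm_num) (by norm_num)).symm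
          have hi1 : IntervalIntegrable (fun x => Real.log x * (3:ℝ)^(-r))
              MeasureTheory.volume 2 3 := by
            apply ContinuousOn.intervalIntegrable
            apply ContinuousOn.mul _ continuousOn_const
            intro x hx
            rw [Set.uIcc_of_le (by norm_num : (2:ℝ) ≤ 3)] at hx
            exact (Real.continuousAt_log (by linarith [hx.1] : x ≠ 0)).continuousWithinAt
          have hi2 : IntervalIntegrable (FF r) MeasureTheory.volume 2 3 := by
            apply ContinuousOn.intervalIntegrable
            apply contFF
            rw [Set.uIcc_of_le (by norm_num : (2:ℝ) ≤ 3)]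
            intro x hx; linarith [hx.1]
          have hmono : ∫ x in (2:ℝ)..3, Real.log x * (3:ℝ)^(-r)
              ≤ ∫ x in (2:ℝ)..3, FF r x := by
            apply intervalIntegral.integral_mono_on (by norm_num) hi1 hi2
            intro x hx
            have hx2 : (2:ℝ) ≤ x := hx.1
            have hx3 : x ≤ 3 := hx.2
            have hxr : (3:ℝ)^(-r) ≤ x^(-r) := by
              apply Real.rpow_le_rpow_of_nonpos (by linarith) hx3 (by linarith)
            have hlx : 0 ≤ Real.log x := Real.log_nonneg (by linarith)
            exact mul_le_mul_of_nonneg_left hxr hlx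
          have hval : ∫ x in (2:ℝ)..3, Real.log x * (3:ℝ)^(-r)
              = (3*Real.log 3 - 2*L - 1) * (3:ℝ)^(-r) := by
            rw [intervalIntegral.integral_mul_const, integral_log]
            rw [hLdef]; ring
          -- numeric inequality: (1 + 2L - 2 log 3) * 3^{-r} ≤ L * (B*B)/2
          have hP : (3:ℝ)^(-r) = (4:ℝ)^(-r) * ((4:ℝ)/3)^r := by
            rw [Real.rpow_neg (by norm_num : (0:ℝ) ≤ 4),
              Real.rpow_neg (by norm_num : (0:ℝ) ≤ 3),
              Real.div_rpow (by norm_num : (0:ℝ) ≤ 4) (by norm_num : (0:ℝ) ≤ 3)]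
            have h40 : (0:ℝ) < (4:ℝ)^r := Real.rpow_pos_of_pos (by norm_num) _
            have h30 : (0:ℝ) < (3:ℝ)^r := Real.rpow_pos_of_pos (by norm_num) _
            field_simp
          have hR : ((4:ℝ)/3)^r ≤ 1.54 := by
            have h1 : ((4:ℝ)/3)^r ≤ ((4:ℝ)/3)^((3:ℝ)/2) :=
              Real.rpow_le_rpow_of_exponent_le (by norm_num) hr32
            have h2 : (((4:ℝ)/3)^((3:ℝ)/2))^(2:ℕ) = ((4:ℝ)/3)^((3:ℝ)) := by
              rw [← Real.rpow_natCast (((4:ℝ)/3)^((3:ℝ)/2)) 2,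
                ← Real.rpow_mul (by norm_num : (0:ℝ) ≤ 4/3)]
              norm_num
            have h4 : ((4:ℝ)/3)^((3:ℝ)) = 64/27 := by
              rw [show ((3:ℝ)) = ((3:ℕ):ℝ) by norm_num, Real.rpow_natCast]; norm_num
            have h3 : (0:ℝ) ≤ ((4:ℝ)/3)^((3:ℝ)/2) :=
              (Real.rpow_pos_of_pos (by norm_num) _).le
            nlinarith [h2, h3, h4]
          have hbeta0 : (0:ℝ) ≤ 1 + 2*L - 2*Real.log 3 := by nlinarith
          have hnum : (1 + 2*L - 2*Real.log 3) * ((4:ℝ)/3)^r ≤ L/2 := by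
            have hR0 : (0:ℝ) ≤ ((4:ℝ)/3)^r := (Real.rpow_pos_of_pos (by norm_num) _).le
            calc (1 + 2*L - 2*Real.log 3) * ((4:ℝ)/3)^r
                ≤ (1 + 2*L - 2*Real.log 3) * 1.54 := mul_le_mul_of_nonneg_left hR hbeta0
              _ ≤ L/2 := by nlinarith
          have hmain : (1 + 2*L - 2*Real.log 3) * (3:ℝ)^(-r) ≤ L * (B*B)/2 := by
            rw [hP, hBB]
            calc (1 + 2*L - 2*Real.log 3) * ((4:ℝ)^(-r) * ((4:ℝ)/3)^r)
                = ((1 + 2*L - 2*Real.log 3) * ((4:ℝ)/3)^r) * (4:ℝ)^(-r) := by ring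
              _ ≤ (L/2) * (4:ℝ)^(-r) := mul_le_mul_of_nonneg_right hnum h4r0.le
              _ = L * (4:ℝ)^(-r) / 2 := by ring
          have hFF3 : FF r 3 = Real.log 3 * (3:ℝ)^(-r) := rfl
          have hmain' : Real.log 3 * (3:ℝ)^(-r)
              - (3*Real.log 3 - 2*L - 1) * (3:ℝ)^(-r) ≤ L*(B*B)/2 := by
            have he : Real.log 3 * (3:ℝ)^(-r) - (3*Real.log 3 - 2*L - 1) * (3:ℝ)^(-r)
                = (1 + 2*L - 2*Real.log 3) * (3:ℝ)^(-r) := by ring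
            linarith [he ▸ hmain]
          rw [hFF3, hint]
          linarith [hmono, hval ▸ hmono, hmain']
        -- split off the first term
        rw [Finset.sum_range_succ']
        have hc0 : FF r (2 + ((0+1:ℕ):ℝ)) = FF r 3 := by norm_num
        have hcongr : ∀ j : ℕ, FF r (2 + (((j+1)+1:ℕ):ℝ)) = FF r (3 + ((j+1:ℕ):ℝ)) := by
          intro j; congr 1; push_cast; ring
        rw [hc0]
        have hrw : ∑ j ∈ Finset.range k, FF r (2 + (((j+1)+1:ℕ):ℝ))
            = ∑ j ∈ Finset.range k, FF r (3 + ((j+1:ℕ):ℝ)) :=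
          Finset.sum_congr rfl (fun j _ => hcongr j)
        rw [hrw]
        have hcast3 : (1:ℝ) ≤ 3 + ((k:ℕ):ℝ) ∧ (3:ℝ) ≤ 3 + ((k:ℕ):ℝ) := by
          constructor <;> · have : (0:ℝ) ≤ ((k:ℕ):ℝ) := Nat.cast_nonneg _
                            linarith
        have hanti3 : AntitoneOn (FF r) (Set.Icc (3:ℝ) (3 + ((k:ℕ):ℝ))) :=
          (antitone_FF r 3 (by norm_num) (by linarith) (by nlinarith)).mono
            (fun x hx => hx.1)
        have h1 := hanti3.sum_le_integral
        have h2 : ∫ x in (3:ℝ)..(3 + ((k:ℕ):ℝ)), FF r x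
            = GG r (3 + ((k:ℕ):ℝ)) - GG r 3 :=
          integral_FF r _ _ hr1 (by norm_num) hcast3.2
        have h3 := GG_nonpos r (3 + ((k:ℕ):ℝ)) hr1 hcast3.1
        calc (∑ j ∈ Finset.range k, FF r (3 + ((j+1:ℕ):ℝ))) + FF r 3
            ≤ (GG r (3 + ((k:ℕ):ℝ)) - GG r 3) + (L * (B*B)/2 + (GG r 3 - GG r 2)) := by
              have := h1.trans (le_of_eq h2)
              linarith [hF3, this]
          _ ≤ L * (B*B)/2 + (- GG r 2) := by linarith
    -- now assemble
    have hsplit : ∑ i ∈ Finset.range (k+3),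
        n * Real.log ((i : ℝ) + 1) / (((i : ℝ) + 1) ^ r + n)
        = (n * Real.log ((0:ℕ) + (1:ℝ)) / ((((0:ℕ):ℝ) + 1) ^ r + n))
          + (n * Real.log (((1:ℕ):ℝ) + 1) / ((((1:ℕ):ℝ) + 1) ^ r + n))
          + ∑ i ∈ Finset.Ico 2 (k+3),
              n * Real.log ((i : ℝ) + 1) / (((i : ℝ) + 1) ^ r + n) := by
      rw [Finset.range_eq_Ico,
        ← Finset.sum_Ico_consecutive _ (by omega : 0 ≤ 2) (by omega : 2 ≤ k+3)]
      congr 1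
      rw [show Finset.Ico 0 2 = {0, 1} from rfl]
      rw [Finset.sum_insert (by decide), Finset.sum_singleton]
    have hzero : n * Real.log ((0:ℕ) + (1:ℝ)) / ((((0:ℕ):ℝ) + 1) ^ r + n) = 0 := by
      norm_num
    have hterm1 : n * Real.log (((1:ℕ):ℝ) + 1) / ((((1:ℕ):ℝ) + 1) ^ r + n)
        ≤ n * (L*B) - n * (L*(B*B)/2) := by
      have e : ((1:ℕ):ℝ) + 1 = 2 := by norm_num
      rw [e, ← hLdef]
      rw [div_le_iff₀ (by positivity)]
      have hAB : (2:ℝ)^r * B = 1 := by rw [hB]; field_simp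
      have hnB : n * B ≤ 1 := by
        have h := mul_le_mul_of_nonneg_right hn2r hB0.le
        rwa [hAB] at h
      have hkey0 : 0 ≤ n*L*B*(n - 1/2 - n*B/2) := by
        apply mul_nonneg (by positivity)
        nlinarith
      have expand2 : (n*(L*B) - n*(L*(B*B)/2)) * ((2:ℝ)^r + n) - n*L
          = n*L*B*(n - 1/2 - n*B/2) := by
        linear_combination (n*L - n*L*B/2) * hAB
      linarith [expand2, hkey0]
    have htermwise : ∀ i : ℕ, n * Real.log ((i : ℝ) + 1) / (((i : ℝ) + 1) ^ r + n)
        ≤ n * FF r ((i:ℝ)+1) := by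
      intro i
      have hm0 : (0:ℝ) < (i:ℝ)+1 := by positivity
      have hm1 : (1:ℝ) ≤ (i:ℝ)+1 := by
        have : (0:ℝ) ≤ (i:ℝ) := Nat.cast_nonneg _
        linarith
      have hlog : (0:ℝ) ≤ Real.log ((i:ℝ)+1) := Real.log_nonneg hm1
      have hmr : (0:ℝ) < ((i:ℝ)+1)^r := Real.rpow_pos_of_pos hm0 _
      have h1 : n * Real.log ((i:ℝ)+1) / (((i:ℝ)+1)^r + n)
          ≤ n * Real.log ((i:ℝ)+1) / (((i:ℝ)+1)^r) := by
        gcongr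
        linarith
      have h2 : n * Real.log ((i:ℝ)+1) / (((i:ℝ)+1)^r) = n * FF r ((i:ℝ)+1) := by
        simp only [FF]
        rw [Real.rpow_neg hm0.le]
        ring
      linarith [h1, h2 ▸ h1]
    have hIco : ∑ i ∈ Finset.Ico 2 (k+3),
        n * Real.log ((i : ℝ) + 1) / (((i : ℝ) + 1) ^ r + n)
        ≤ n * ∑ j ∈ Finset.range (k+1), FF r (2 + ((j+1 : ℕ) : ℝ)) := by
      calc ∑ i ∈ Finset.Ico 2 (k+3), n * Real.log ((i : ℝ) + 1) / (((i : ℝ) + 1) ^ r + n)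
          ≤ ∑ i ∈ Finset.Ico 2 (k+3), n * FF r ((i:ℝ)+1) :=
            Finset.sum_le_sum (fun i _ => htermwise i)
        _ = ∑ j ∈ Finset.range (k+1), n * FF r (2 + ((j+1 : ℕ) : ℝ)) := by
            rw [Finset.sum_Ico_eq_sum_range]
            have hk : k + 3 - 2 = k + 1 := by omega
            rw [hk]
            apply Finset.sum_congr rfl
            intro j _
            congr 1
            push_cast
            ring
        _ = n * ∑ j ∈ Finset.range (k+1), FF r (2 + ((j+1 : ℕ) : ℝ)) := by
            rw [Finset.mul_sum]
    have hG2 : - GG r 2 = 2*B*(L/(r-1) + 1/(r-1)^2) := by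
      simp only [GG, neg_neg]
      rw [show (1:ℝ) - r = 1 + (-r) by ring, Real.rpow_add (by norm_num : (0:ℝ) < 2),
        Real.rpow_one]
    have hfin : n*(L*B) + n*(2*B*(L/(r-1) + 1/(r-1)^2))
        ≤ (1 + 2 / c + 2 / (c ^ 2 * L)) * L * n * B := by
      have e : (1 + 2/c + 2/(c^2*L))*L*n*B = n*(L*B) + n*(2*B*(L/c + 1/c^2)) := by
        field_simp
        ring_nf
      have h1 : L/(r-1) ≤ L/c := by gcongr
      have h2 : 1/(r-1)^2 ≤ 1/c^2 := by
        apply one_div_le_one_div_of_le (by positivity)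
        nlinarith
      rw [e]
      have h3 := mul_le_mul_of_nonneg_left (add_le_add h1 h2)
        (show (0:ℝ) ≤ n*(2*B) by positivity)
      nlinarith [h3]
    rw [hsplit]
    calc n * Real.log ((0:ℕ) + (1:ℝ)) / ((((0:ℕ):ℝ) + 1) ^ r + n)
          + n * Real.log (((1:ℕ):ℝ) + 1) / ((((1:ℕ):ℝ) + 1) ^ r + n)
          + ∑ i ∈ Finset.Ico 2 (k+3),
              n * Real.log ((i : ℝ) + 1) / (((i : ℝ) + 1) ^ r + n)
        ≤ 0 + (n * (L*B) - n * (L*(B*B)/2))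
            + n * (L * (B*B)/2 + (- GG r 2)) := by
          have := mul_le_mul_of_nonneg_left hkey2 hn0.le
          linarith [hzero, hterm1, hIco, this]
      _ = n*(L*B) + n*(2*B*(L/(r-1) + 1/(r-1)^2)) := by rw [hG2]; ring
      _ ≤ (1 + 2 / c + 2 / (c ^ 2 * L)) * L * n * B := hfin
  calc ∑ i ∈ Finset.range N, n * Real.log ((i : ℝ) + 1) / (((i : ℝ) + 1) ^ r + n)
      ≤ ∑ i ∈ Finset.range (N+3), n * Real.log ((i : ℝ) + 1) / (((i : ℝ) + 1) ^ r + n) :=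
        Finset.sum_le_sum_of_subset_of_nonneg
          (Finset.range_subset_range.mpr (by omega)) (fun i _ _ => hpos i)
    _ ≤ (1 + 2 / c + 2 / (c ^ 2 * L)) * L * n * B := key N
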